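/- Let 0 < α < 1 and let X be a metric space free of k-point SRA(α)-subspaces. Suppose {x₁,…,x_{k−1}} ⊆ X satisfies the SRA(α/2)-condition, R = min_{i<j} d(xᵢ,xⱼ), and y₁, y₂ ∈ B_{αR/6}(x₁). If |d(y₁,x_m) − d(y₂,x_m)| < α·d(y₁,y₂) for every m ∈ {2,…,k−1}, then the k-point set {y₁, y₂, x₂, …, x_{k−1}} satisfies the SRA(α)-condition (contradicting the freeness hypothesis; hence such y₁,y₂ cannot exist with y₁ ≠ y₂). -/
import Mathlib


open Metric Set

/-- A subset `Y` of a metric space satisfies the `SRA(β)`-condition. -/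
def SRAOn {X : Type*} [MetricSpace X] (β : ℝ) (Y : Set X) : Prop :=
  ∀ a ∈ Y, ∀ b ∈ Y, ∀ c ∈ Y,
    dist a b ≤ max (dist a c + β * dist c b) (β * dist a c + dist c b)

/-- A subset `S` of a metric space is free of `k`-point `SRA(β)`-subspaces. -/
def SRAFree {X : Type*} [MetricSpace X] (k : ℕ) (β : ℝ) (S : Set X) : Prop :=
  ∀ Y : Finset X, ↑Y ⊆ S → Y.card = k →
    ∃ x ∈ Y, ∃ z ∈ Y, ∃ y ∈ Y,
      dist x y > max (dist x z + β * dist z y) (β * dist x z + dist z y)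

theorem stmt_5 {X : Type*} [MetricSpace X] (n : ℕ) (α : ℝ) (hα : 0 < α) (hα1 : α < 1)
    (hfree : SRAFree (n + 2) α (univ : Set X))
    (x : Fin (n + 1) → X)
    (hSRA : ∀ i j l : Fin (n + 1), dist (x i) (x j) ≤
      max (dist (x i) (x l) + α / 2 * dist (x l) (x j))
        (α / 2 * dist (x i) (x l) + dist (x l) (x j)))
    (R : ℝ)
    (hR : IsLeast {d : ℝ | ∃ i j : Fin (n + 1), i ≠ j ∧ d = dist (x i) (x j)} R)
    (y₁ y₂ : X)
    (hy₁ : y₁ ∈ ball (x 0) (α * R / 6)) (hy₂ : y₂ ∈ ball (x 0) (α * R / 6))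
    (hnd : ∀ m : Fin n, |dist y₁ (x m.succ) - dist y₂ (x m.succ)| < α * dist y₁ y₂) :
    SRAOn α ({y₁, y₂} ∪ range fun i : Fin n => x i.succ) := by
  have hRle : ∀ i j : Fin (n+1), i ≠ j → R ≤ dist (x i) (x j) :=
    fun i j hij => hR.2 ⟨i, j, hij, rfl⟩
  rw [mem_ball] at hy₁ hy₂
  have hR0 : 0 < R := by
    by_contra h
    push_neg at h
    have h0 : (0:ℝ) ≤ dist y₁ (x 0) := dist_nonneg
    nlinarith
  have hαR : 0 < α * R := mul_pos hα hR0
  have hαR1 : α * R < R := by nlinarith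
  -- the target inequality as an abbreviation
  set G : X → X → X → Prop := fun a b c =>
    dist a b ≤ max (dist a c + α * dist c b) (α * dist a c + dist c b) with hG
  have symmG : ∀ a b c : X, G a b c → G b a c := by
    intro a b c h
    simp only [hG] at h ⊢
    rw [dist_comm b a, dist_comm b c, dist_comm c a]
    rcases le_max_iff.mp h with h' | h'
    · exact le_max_iff.mpr (Or.inr (by linarith))
    · exact le_max_iff.mpr (Or.inl (by linarith))
  have haeqb : ∀ a c : X, G a a c := by
    intro a c
    simp only [hG, dist_self]
    have h1 : (0:ℝ) ≤ dist a c := dist_nonneg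
    have h2 : (0:ℝ) ≤ α * dist c a := mul_nonneg hα.le dist_nonneg
    exact le_max_iff.mpr (Or.inl (by linarith))
  have hceqa : ∀ a b : X, G a b a := by
    intro a b
    simp only [hG, dist_self, zero_add, mul_zero]
    exact le_max_right _ _
  have hceqb : ∀ a b : X, G a b b := by
    intro a b
    simp only [hG, dist_self, add_zero, mul_zero]
    exact le_max_left _ _
  have hxxx : ∀ i j l : Fin (n+1), G (x i) (x j) (x l) := by
    intro i j l
    simp only [hG]
    have h2 : (0:ℝ) ≤ α * dist (x l) (x j) := mul_nonneg hα.le dist_nonneg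
    have h3 : (0:ℝ) ≤ α * dist (x i) (x l) := mul_nonneg hα.le dist_nonneg
    rcases le_max_iff.mp (hSRA i j l) with h | h
    · exact le_max_iff.mpr (Or.inl (by linarith))
    · exact le_max_iff.mpr (Or.inr (by linarith))
  -- two y-type points, x-type center
  have hyy : ∀ u v : X, dist u (x 0) < α * R / 6 → dist v (x 0) < α * R / 6 →
      ∀ i : Fin n, G u v (x i.succ) := by
    intro u v hu hv i
    simp only [hG]
    have h1 : R ≤ dist (x 0) (x i.succ) := hRle _ _ (Ne.symm (Fin.succ_ne_zero i))
    have h2 : dist u v ≤ dist u (x 0) + dist (x 0) v := dist_triangle _ _ _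
    have h3 : dist (x 0) (x i.succ) ≤ dist (x 0) u + dist u (x i.succ) := dist_triangle _ _ _
    have e1 : dist (x 0) u = dist u (x 0) := dist_comm _ _
    have e2 : dist (x 0) v = dist v (x 0) := dist_comm _ _
    have h4 : (0:ℝ) ≤ α * dist (x i.succ) v := mul_nonneg hα.le dist_nonneg
    exact le_max_iff.mpr (Or.inl (by linarith))
  -- y-type, x-type with x-type center
  have hyxx : ∀ u : X, dist u (x 0) < α * R / 6 →
      ∀ i j : Fin n, G u (x i.succ) (x j.succ) := by
    intro u hu i j
    by_cases hij : i = j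
    · subst hij; exact hceqb _ _
    simp only [hG]
    have hC : R ≤ dist (x j.succ) (x i.succ) :=
      hRle _ _ (fun h => hij (Fin.succ_injective _ h).symm)
    have hB : R ≤ dist (x 0) (x j.succ) := hRle _ _ (Ne.symm (Fin.succ_ne_zero j))
    have t1 : dist u (x i.succ) ≤ dist u (x 0) + dist (x 0) (x i.succ) := dist_triangle _ _ _
    have t2 : dist (x 0) (x j.succ) ≤ dist (x 0) u + dist u (x j.succ) := dist_triangle _ _ _
    have e1 : dist (x 0) u = dist u (x 0) := dist_comm _ _
    have pC : α * R ≤ α * dist (x j.succ) (x i.succ) := by nlinarith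
    have pB : α * R ≤ α * dist (x 0) (x j.succ) := by nlinarith
    have pu : α * dist u (x 0) ≤ dist u (x 0) := by
      nlinarith [dist_nonneg (x := u) (y := x 0)]
    have puj : α * (dist (x 0) (x j.succ) - dist u (x 0)) ≤ α * dist u (x j.succ) := by
      nlinarith
    rcases le_max_iff.mp (hSRA 0 i.succ j.succ) with h | h
    · exact le_max_iff.mpr (Or.inl (by linarith))
    · exact le_max_iff.mpr (Or.inr (by nlinarith))
  -- two x-type points, y-type center
  have hxxy : ∀ u : X, dist u (x 0) < α * R / 6 →
      ∀ i j : Fin n, G (x i.succ) (x j.succ) u := by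
    intro u hu i j
    simp only [hG]
    have hA : R ≤ dist (x 0) (x i.succ) := hRle _ _ (Ne.symm (Fin.succ_ne_zero i))
    have hB : R ≤ dist (x 0) (x j.succ) := hRle _ _ (Ne.symm (Fin.succ_ne_zero j))
    have t1 : dist (x i.succ) (x 0) ≤ dist (x i.succ) u + dist u (x 0) := dist_triangle _ _ _
    have t2 : dist (x 0) (x j.succ) ≤ dist (x 0) u + dist u (x j.succ) := dist_triangle _ _ _
    have e1 : dist (x 0) u = dist u (x 0) := dist_comm _ _
    have pu : α * dist u (x 0) ≤ dist u (x 0) := by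
      nlinarith [dist_nonneg (x := u) (y := x 0)]
    have pq : α * (dist (x 0) (x j.succ) - dist u (x 0)) ≤ α * dist u (x j.succ) := by
      nlinarith
    have pp : α * (dist (x i.succ) (x 0) - dist u (x 0)) ≤ α * dist (x i.succ) u := by
      nlinarith [dist_triangle (x i.succ) (x 0) u, dist_comm (x 0) u]
    have pB : α * R ≤ α * dist (x 0) (x j.succ) := by nlinarith
    have pA : α * R ≤ α * dist (x i.succ) (x 0) := by
      nlinarith [dist_comm (x i.succ) (x 0)]
    rcases le_max_iff.mp (hSRA i.succ j.succ 0) with h | h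
    · exact le_max_iff.mpr (Or.inl (by nlinarith))
    · exact le_max_iff.mpr (Or.inr (by nlinarith))
  -- the non-degeneracy cases
  have hyxy : ∀ m : Fin n, G y₁ (x m.succ) y₂ ∧ G y₂ (x m.succ) y₁ := by
    intro m
    have h := abs_sub_lt_iff.mp (hnd m)
    have e : α * dist y₂ y₁ = α * dist y₁ y₂ := by rw [dist_comm y₂ y₁]
    constructor
    · simp only [hG]
      exact le_max_iff.mpr (Or.inr (by linarith [h.1]))
    · simp only [hG]
      exact le_max_iff.mpr (Or.inr (by linarith [h.2]))
  -- now the case analysis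
  intro a ha b hb c hc
  simp only [union_def, mem_setOf_eq, mem_insert_iff, mem_singleton_iff, mem_range] at ha hb hc
  have key : G a b c := by
    rcases hc with (rfl | rfl) | ⟨l, rfl⟩
    · -- c = y₁
      rcases ha with (rfl | rfl) | ⟨i, rfl⟩
      · exact hceqa _ _
      · rcases hb with (rfl | rfl) | ⟨j, rfl⟩
        · exact hceqb _ _
        · exact haeqb _ _
        · exact (hyxy j).2
      · rcases hb with (rfl | rfl) | ⟨j, rfl⟩
        · exact hceqb _ _
        · exact symmG _ _ _ (hyxy i).2
        · exact hxxy _ hy₁ i j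
    · -- c = y₂
      rcases ha with (rfl | rfl) | ⟨i, rfl⟩
      · rcases hb with (rfl | rfl) | ⟨j, rfl⟩
        · exact haeqb _ _
        · exact hceqb _ _
        · exact (hyxy j).1
      · exact hceqa _ _
      · rcases hb with (rfl | rfl) | ⟨j, rfl⟩
        · exact symmG _ _ _ (hyxy i).1
        · exact hceqb _ _
        · exact hxxy _ hy₂ i j
    · -- c = x l.succ
      rcases ha with (rfl | rfl) | ⟨i, rfl⟩
      · rcases hb with (rfl | rfl) | ⟨j, rfl⟩
        · exact haeqb _ _
        · exact hyy _ _ hy₁ hy₂ l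
        · exact hyxx _ hy₁ j l
      · rcases hb with (rfl | rfl) | ⟨j, rfl⟩
        · exact hyy _ _ hy₂ hy₁ l
        · exact haeqb _ _
        · exact hyxx _ hy₂ j l
      · rcases hb with (rfl | rfl) | ⟨j, rfl⟩
        · exact symmG _ _ _ (hyxx _ hy₁ i l)
        · exact symmG _ _ _ (hyxx _ hy₂ i l)
        · exact hxxx i.succ j.succ l.succ
  simpa only [hG] using key
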